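/- arXiv:1905.09504 — 4 statements merged into one kernel-verified Lean document; each statement's English description precedes it below -/
import Mathlib

section
/- Maximum principle for the heat equation on a metric graph: let O be a precompact connected open subset of a metric graph and u : [0,T] × closure(O) → ℝ be continuous, differentiable in t on (0,T), smooth in x on each open edge, satisfying Kirchhoff's law at interior vertices, and Δu - ∂u/∂t ≥ 0 on (0,T) × O. Then the maximum of u over [0,T] × closure(O) is attained on the parabolic boundary ([0,T] × ∂O) ∪ ({0} × closure(O)). -/
open Set Filter Topology

/-- At a left endpoint maximum, the one-sided derivative is nonpositive. -/
private lemma aux_deriv_nonpos_left {f : ℝ → ℝ} {a b d : ℝ} (hab : a < b)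
    (hd : HasDerivWithinAt f d (Set.Icc a b) a) (hmax : ∀ x ∈ Set.Icc a b, f x ≤ f a) :
    d ≤ 0 := by
  have h := hasDerivWithinAt_iff_tendsto_slope.1 hd
  have hset : Set.Icc a b \ {a} = Set.Ioc a b := Set.Icc_diff_left
  have hne : (𝓝[Set.Icc a b \ {a}] a).NeBot := by
    rw [hset]
    refine mem_closure_iff_nhdsWithin_neBot.1 ?_
    rw [closure_Ioc hab.ne]
    exact ⟨le_refl a, hab.le⟩
  refine le_of_tendsto h (eventually_mem_nhdsWithin.mono ?_)
  rintro y ⟨hy, hy'⟩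
  have hya : a < y := lt_of_le_of_ne hy.1 (fun h => hy' (by simp [h.symm]))
  rw [slope_def_field]
  apply div_nonpos_of_nonpos_of_nonneg
  · linarith [hmax y hy]
  · linarith

/-- At a right endpoint maximum, the one-sided derivative is nonnegative. -/
private lemma aux_deriv_nonneg_right {f : ℝ → ℝ} {a b d : ℝ} (hab : a < b)
    (hd : HasDerivWithinAt f d (Set.Icc a b) b) (hmax : ∀ x ∈ Set.Icc a b, f x ≤ f b) :
    0 ≤ d := by
  have h := hasDerivWithinAt_iff_tendsto_slope.1 hd
  have hset : Set.Icc a b \ {b} = Set.Ico a b := Set.Icc_sdiff_right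
  have hne : (𝓝[Set.Icc a b \ {b}] b).NeBot := by
    rw [hset]
    refine mem_closure_iff_nhdsWithin_neBot.1 ?_
    rw [closure_Ico hab.ne]
    exact ⟨hab.le, le_refl b⟩
  refine ge_of_tendsto h (eventually_mem_nhdsWithin.mono ?_)
  rintro y ⟨hy, hy'⟩
  have hyb : y < b := lt_of_le_of_ne hy.2 (fun h => hy' (by simp [h]))
  rw [slope_def_field]
  have hnum : f y - f b ≤ 0 := by linarith [hmax y hy]
  have hden : y - b ≤ 0 := by linarith
  have := div_nonneg (neg_nonneg.2 hnum) (neg_nonneg.2 hden)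
  rwa [neg_div_neg_eq] at this

/-- If `f x = 0` and `f` has positive derivative at `x`, then `f > 0` just to the right. -/
private lemma aux_pos_right {f : ℝ → ℝ} {x d : ℝ} (hderiv : HasDerivAt f d x)
    (h0 : f x = 0) (hd : 0 < d) :
    ∃ b, x < b ∧ ∀ y ∈ Set.Ioo x b, 0 < f y := by
  have h := hasDerivAt_iff_tendsto_slope.1 hderiv
  have h2 : Filter.Tendsto (slope f x) (𝓝[>] x) (𝓝 d) :=
    h.mono_left (nhdsWithin_mono x (fun y hy => ne_of_gt hy))
  have h3 : ∀ᶠ y in 𝓝[>] x, 0 < slope f x y := h2.eventually (eventually_gt_nhds hd)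
  obtain ⟨b, hb, hsub⟩ := mem_nhdsGT_iff_exists_Ioo_subset.1 h3
  refine ⟨b, hb, fun y hy => ?_⟩
  have hs := hsub hy
  have hyx : x < y := hy.1
  have := mul_pos hs (sub_pos.2 hyx)
  rw [slope_def_field, div_mul_cancel₀ _ (sub_ne_zero.2 (ne_of_gt hyx))] at this
  linarith

/-- Maximum principle for the heat equation on a metric graph.  The (finite part of the) graph
is given by edges `E` with endpoints `ι e, τ e ∈ V` and lengths `len e`; a function on
`[0,T] ×` graph is given edgewise by `u t e s` (`s ∈ [0, len e]`) together with vertex values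
`uV`, compatible at endpoints.  `Vb` is the set of boundary vertices of the precompact connected
open set `O` (after subdivision, `∂O ⊆` vertices).  If `u` is continuous, differentiable in `t`,
smooth in `s` on each edge, satisfies Kirchhoff's law at interior vertices and
`∂²u/∂s² − ∂u/∂t ≥ 0` on `(0,T) × O`, then the maximum of `u` over `[0,T] × closure(O)` is
attained on the parabolic boundary `([0,T] × ∂O) ∪ ({0} × closure O)`. -/
theorem stmt5
    (E V : Type) [Fintype E] [Fintype V] [Nonempty E] [DecidableEq V]
    (ι τ : E → V) (len : E → ℝ) (hlen : ∀ e, 0 < len e)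
    (T : ℝ) (hT : 0 < T)
    (Vb : Set V)
    (hincident : ∀ v, v ∉ Vb → ∃ e, ι e = v ∨ τ e = v)
    (hconn : ∀ v w : V, Relation.ReflTransGen
      (fun v w => ∃ e, (ι e = v ∧ τ e = w) ∨ (ι e = w ∧ τ e = v)) v w)
    (u : ℝ → E → ℝ → ℝ) (uV : ℝ → V → ℝ)
    (hcompat : ∀ t e, u t e 0 = uV t (ι e) ∧ u t e (len e) = uV t (τ e))
    (hcont : ∀ e, ContinuousOn (fun q : ℝ × ℝ => u q.1 e q.2)
      (Set.Icc 0 T ×ˢ Set.Icc 0 (len e)))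
    (ut us uss : ℝ → E → ℝ → ℝ)
    (hut : ∀ e, ∀ t ∈ Set.Ioo 0 T, ∀ s ∈ Set.Icc 0 (len e),
      HasDerivAt (fun t' => u t' e s) (ut t e s) t)
    (hus : ∀ e, ∀ t ∈ Set.Ioo 0 T, ∀ s ∈ Set.Icc 0 (len e),
      HasDerivWithinAt (fun σ => u t e σ) (us t e s) (Set.Icc 0 (len e)) s)
    (huss : ∀ e, ∀ t ∈ Set.Ioo 0 T, ∀ s ∈ Set.Ioo 0 (len e),
      HasDerivWithinAt (fun σ => us t e σ) (uss t e s) (Set.Ioo 0 (len e)) s)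
    (hkirch : ∀ t ∈ Set.Ioo 0 T, ∀ v, v ∉ Vb →
      (∑ e ∈ Finset.univ.filter fun e => ι e = v, us t e 0)
        = ∑ e ∈ Finset.univ.filter fun e => τ e = v, us t e (len e))
    (hheat : ∀ e, ∀ t ∈ Set.Ioo 0 T, ∀ s ∈ Set.Ioo 0 (len e), 0 ≤ uss t e s - ut t e s) :
    ∃ M : ℝ,
      ((∃ e, ∃ s ∈ Set.Icc 0 (len e), M = u 0 e s) ∨
        (∃ v ∈ Vb, ∃ t ∈ Set.Icc 0 T, M = uV t v)) ∧
      ∀ t ∈ Set.Icc 0 T, ∀ e, ∀ s ∈ Set.Icc 0 (len e), u t e s ≤ M := by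
  classical
  -- The parabolic boundary pieces of each edge rectangle
  set K : E → Set (ℝ × ℝ) := fun e =>
    ({(0:ℝ)} ×ˢ Set.Icc 0 (len e)) ∪
      ((if ι e ∈ Vb then Set.Icc 0 T ×ˢ {(0:ℝ)} else ∅) ∪
        (if τ e ∈ Vb then Set.Icc 0 T ×ˢ {len e} else ∅)) with hK
  have hKsub : ∀ e, K e ⊆ Set.Icc 0 T ×ˢ Set.Icc 0 (len e) := by
    intro e q hq
    rcases hq with h | h | h
    · exact ⟨by rw [Set.mem_singleton_iff.1 h.1]; exact ⟨le_refl 0, hT.le⟩, h.2⟩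
    · by_cases hv : ι e ∈ Vb
      · rw [if_pos hv] at h
        exact ⟨h.1, by rw [Set.mem_singleton_iff.1 h.2]; exact ⟨le_refl 0, (hlen e).le⟩⟩
      · rw [if_neg hv] at h; exact absurd h (Set.notMem_empty q)
    · by_cases hv : τ e ∈ Vb
      · rw [if_pos hv] at h
        exact ⟨h.1, by rw [Set.mem_singleton_iff.1 h.2]; exact ⟨(hlen e).le, le_refl _⟩⟩
      · rw [if_neg hv] at h; exact absurd h (Set.notMem_empty q)
  have hKcpt : ∀ e, IsCompact (K e) := by
    intro e
    refine (isCompact_singleton.prod isCompact_Icc).union (IsCompact.union ?_ ?_) <;>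
      split_ifs <;>
      first
        | exact isCompact_Icc.prod isCompact_singleton
        | exact isCompact_empty
  have hKne : ∀ e, (K e).Nonempty :=
    fun e => ⟨((0:ℝ), (0:ℝ)), Or.inl ⟨rfl, ⟨le_refl 0, (hlen e).le⟩⟩⟩
  have hKmax : ∀ e, ∃ p, p ∈ K e ∧ ∀ q ∈ K e, u q.1 e q.2 ≤ u p.1 e p.2 := by
    intro e
    obtain ⟨p, hp, hmax⟩ := (hKcpt e).exists_isMaxOn (hKne e) ((hcont e).mono (hKsub e))
    exact ⟨p, hp, fun q hq => hmax hq⟩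
  choose p hpK hpmax using hKmax
  obtain ⟨e₁, -, he₁⟩ := Finset.exists_max_image Finset.univ
    (fun e => u (p e).1 e (p e).2) ⟨Classical.arbitrary E, Finset.mem_univ _⟩
  set B : ℝ := u (p e₁).1 e₁ (p e₁).2 with hB
  -- B is a parabolic boundary value
  have hBmem : ((∃ e, ∃ s ∈ Set.Icc 0 (len e), B = u 0 e s) ∨
      (∃ v ∈ Vb, ∃ t ∈ Set.Icc 0 T, B = uV t v)) := by
    rcases hpK e₁ with h | h | h
    · left
      exact ⟨e₁, (p e₁).2, h.2, by rw [hB, Set.mem_singleton_iff.1 h.1]⟩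
    · by_cases hv : ι e₁ ∈ Vb
      · rw [if_pos hv] at h
        right
        refine ⟨ι e₁, hv, (p e₁).1, h.1, ?_⟩
        rw [hB, Set.mem_singleton_iff.1 h.2, (hcompat (p e₁).1 e₁).1]
      · rw [if_neg hv] at h; exact absurd h (Set.notMem_empty _)
    · by_cases hv : τ e₁ ∈ Vb
      · rw [if_pos hv] at h
        right
        refine ⟨τ e₁, hv, (p e₁).1, h.1, ?_⟩
        rw [hB, Set.mem_singleton_iff.1 h.2, (hcompat (p e₁).1 e₁).2]
      · rw [if_neg hv] at h; exact absurd h (Set.notMem_empty _)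
  -- boundary bounds
  have hB0 : ∀ e, ∀ s ∈ Set.Icc 0 (len e), u 0 e s ≤ B := by
    intro e s hs
    exact (hpmax e ((0:ℝ), s) (Or.inl ⟨rfl, hs⟩)).trans (he₁ e (Finset.mem_univ _))
  have hBι : ∀ e, ι e ∈ Vb → ∀ t ∈ Set.Icc 0 T, u t e 0 ≤ B := by
    intro e hv t ht
    refine (hpmax e (t, (0:ℝ)) (Or.inr (Or.inl ?_))).trans (he₁ e (Finset.mem_univ _))
    rw [if_pos hv]; exact ⟨ht, rfl⟩
  have hBτ : ∀ e, τ e ∈ Vb → ∀ t ∈ Set.Icc 0 T, u t e (len e) ≤ B := by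
    intro e hv t ht
    refine (hpmax e (t, len e) (Or.inr (Or.inr ?_))).trans (he₁ e (Finset.mem_univ _))
    rw [if_pos hv]; exact ⟨ht, rfl⟩
  set C : ℝ := Finset.univ.sup' Finset.univ_nonempty (fun e => (len e)^2) with hC
  have hCle : ∀ e, (len e)^2 ≤ C := fun e => Finset.le_sup' (fun e => (len e)^2) (Finset.mem_univ e)
  have hC0 : 0 ≤ C := le_trans (sq_nonneg _) (hCle (Classical.arbitrary E))
  -- Key estimate up to time T' < T
  have hkey : ∀ ε, 0 < ε → ∀ T', 0 < T' → T' < T →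
      ∀ e, ∀ t ∈ Set.Icc 0 T', ∀ s ∈ Set.Icc 0 (len e), u t e s ≤ B + ε * (T + C) := by
    intro ε hε T' hT'0 hT'T
    set η : ℝ := ε / 4 with hη
    have hηpos : 0 < η := by positivity
    set F : ℝ → E → ℝ → ℝ := fun t e s => u t e s - ε * t - η * (s^2 - s * len e) with hF
    have hFcont : ∀ e, ContinuousOn (fun q : ℝ × ℝ => F q.1 e q.2)
        (Set.Icc 0 T' ×ˢ Set.Icc 0 (len e)) := by
      intro e
      have h1 : ContinuousOn (fun q : ℝ × ℝ => u q.1 e q.2)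
          (Set.Icc 0 T' ×ˢ Set.Icc 0 (len e)) :=
        (hcont e).mono (Set.prod_mono_left (Set.Icc_subset_Icc_right hT'T.le))
      have h2 : Continuous (fun q : ℝ × ℝ => ε * q.1 + η * (q.2^2 - q.2 * len e)) := by
        fun_prop
      have := h1.sub h2.continuousOn
      refine this.congr ?_
      intro q hq; simp only [hF, Pi.sub_apply]; ring
    have hFmax : ∀ e, ∃ q, q ∈ Set.Icc 0 T' ×ˢ Set.Icc 0 (len e) ∧
        ∀ r ∈ Set.Icc 0 T' ×ˢ Set.Icc 0 (len e), F r.1 e r.2 ≤ F q.1 e q.2 := by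
      intro e
      obtain ⟨q, hq, hmax⟩ := (isCompact_Icc.prod isCompact_Icc).exists_isMaxOn
        ⟨((0:ℝ),(0:ℝ)), ⟨⟨le_refl 0, hT'0.le⟩, ⟨le_refl 0, (hlen e).le⟩⟩⟩ (hFcont e)
      exact ⟨q, hq, fun r hr => hmax hr⟩
    choose q hqmem hqmax using hFmax
    obtain ⟨e₀, -, he₀⟩ := Finset.exists_max_image Finset.univ
      (fun e => F (q e).1 e (q e).2) ⟨Classical.arbitrary E, Finset.mem_univ _⟩
    set t₀ : ℝ := (q e₀).1 with ht₀
    set s₀ : ℝ := (q e₀).2 with hs₀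
    have hglob : ∀ e, ∀ t ∈ Set.Icc 0 T', ∀ s ∈ Set.Icc 0 (len e),
        F t e s ≤ F t₀ e₀ s₀ :=
      fun e t ht s hs => (hqmax e (t, s) ⟨ht, hs⟩).trans (he₀ e (Finset.mem_univ _))
    have ht₀mem : t₀ ∈ Set.Icc 0 T' := (hqmem e₀).1
    have hs₀mem : s₀ ∈ Set.Icc 0 (len e₀) := (hqmem e₀).2
    have ht₀T : t₀ ≤ T := le_trans ht₀mem.2 hT'T.le
    -- the maximum is bounded by the parabolic boundary maximum
    have hbdry : F t₀ e₀ s₀ ≤ B + η * C := by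
      -- Kirchhoff contradiction at interior vertices
      have kirch_contra : ∀ v, v ∉ Vb → t₀ ∈ Set.Ioo 0 T →
          uV t₀ v - ε * t₀ = F t₀ e₀ s₀ → False := by
        intro v hv ht₀Ioo hveq
        have hA : ∀ e, ι e = v → us t₀ e 0 ≤ -(η * len e) := by
          intro e he
          have hmax0 : ∀ s ∈ Set.Icc 0 (len e), F t₀ e s ≤ F t₀ e 0 := by
            intro s hs
            have h1 : F t₀ e s ≤ F t₀ e₀ s₀ := hglob e t₀ ht₀mem s hs
            have h2 : F t₀ e 0 = F t₀ e₀ s₀ := by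
              rw [← hveq]; simp only [hF]
              rw [(hcompat t₀ e).1, he]; ring
            rw [h2]; exact h1
          have hdP : HasDerivAt (fun s : ℝ => η * (s^2 - s * len e))
              (η * (2 * 0 - len e)) 0 := by
            have h1 : HasDerivAt (fun s : ℝ => s^2 - s * len e) (2 * 0 - len e) 0 := by
              simpa using ((hasDerivAt_pow 2 (0:ℝ)).fun_sub
                ((hasDerivAt_id (0:ℝ)).mul_const (len e)))
            simpa [mul_comm] using h1.const_mul η
          have hdF : HasDerivWithinAt (fun s => F t₀ e s)
              (us t₀ e 0 - η * (2 * 0 - len e)) (Set.Icc 0 (len e)) 0 := by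
            have h1 := (hus e t₀ ht₀Ioo 0 ⟨le_refl 0, (hlen e).le⟩)
            simp only [hF]
            exact (h1.sub_const (ε * t₀)).sub hdP.hasDerivWithinAt
          have := aux_deriv_nonpos_left (hlen e) hdF hmax0
          linarith
        have hB' : ∀ e, τ e = v → η * len e ≤ us t₀ e (len e) := by
          intro e he
          have hmaxl : ∀ s ∈ Set.Icc 0 (len e), F t₀ e s ≤ F t₀ e (len e) := by
            intro s hs
            have h1 : F t₀ e s ≤ F t₀ e₀ s₀ := hglob e t₀ ht₀mem s hs
            have h2 : F t₀ e (len e) = F t₀ e₀ s₀ := by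
              rw [← hveq]; simp only [hF]
              rw [(hcompat t₀ e).2, he]; ring
            rw [h2]; exact h1
          have hdP : HasDerivAt (fun s : ℝ => η * (s^2 - s * len e))
              (η * (2 * len e - len e)) (len e) := by
            have h1 : HasDerivAt (fun s : ℝ => s^2 - s * len e)
                (2 * len e - len e) (len e) := by
              simpa using ((hasDerivAt_pow 2 (len e)).fun_sub
                ((hasDerivAt_id (len e)).mul_const (len e)))
            simpa [mul_comm] using h1.const_mul η
          have hdF : HasDerivWithinAt (fun s => F t₀ e s)
              (us t₀ e (len e) - η * (2 * len e - len e)) (Set.Icc 0 (len e)) (len e) := by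
            have h1 := (hus e t₀ ht₀Ioo (len e) ⟨(hlen e).le, le_refl _⟩)
            simp only [hF]
            exact (h1.sub_const (ε * t₀)).sub hdP.hasDerivWithinAt
          have := aux_deriv_nonneg_right (hlen e) hdF hmaxl
          have h2l : 2 * len e - len e = len e := by ring
          rw [h2l] at this
          linarith
        set Aset := Finset.univ.filter (fun e => ι e = v) with hAset
        set Bset := Finset.univ.filter (fun e => τ e = v) with hBset
        have hsumA : (∑ e ∈ Aset, us t₀ e 0) ≤ -(η * ∑ e ∈ Aset, len e) := by
          rw [Finset.mul_sum, ← Finset.sum_neg_distrib]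
          exact Finset.sum_le_sum (fun e he => hA e (Finset.mem_filter.1 he).2)
        have hsumB : η * (∑ e ∈ Bset, len e) ≤ ∑ e ∈ Bset, us t₀ e (len e) := by
          rw [Finset.mul_sum]
          exact Finset.sum_le_sum (fun e he => hB' e (Finset.mem_filter.1 he).2)
        have hk := hkirch t₀ ht₀Ioo v hv
        have hSA0 : 0 ≤ ∑ e ∈ Aset, len e :=
          Finset.sum_nonneg (fun e _ => (hlen e).le)
        have hSB0 : 0 ≤ ∑ e ∈ Bset, len e :=
          Finset.sum_nonneg (fun e _ => (hlen e).le)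
        obtain ⟨e, he⟩ := hincident v hv
        rcases he with he | he
        · have hle : len e ≤ ∑ e ∈ Aset, len e :=
            Finset.single_le_sum (fun i _ => (hlen i).le)
              (Finset.mem_filter.2 ⟨Finset.mem_univ _, he⟩)
          have h1 : 0 < η * (∑ e ∈ Aset, len e) :=
            mul_pos hηpos (lt_of_lt_of_le (hlen e) hle)
          have h2 : 0 ≤ η * (∑ e ∈ Bset, len e) := mul_nonneg hηpos.le hSB0
          rw [← hAset, ← hBset] at hk
          linarith
        · have hle : len e ≤ ∑ e ∈ Bset, len e :=
            Finset.single_le_sum (fun i _ => (hlen i).le)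
              (Finset.mem_filter.2 ⟨Finset.mem_univ _, he⟩)
          have h1 : 0 < η * (∑ e ∈ Bset, len e) :=
            mul_pos hηpos (lt_of_lt_of_le (hlen e) hle)
          have h2 : 0 ≤ η * (∑ e ∈ Aset, len e) := mul_nonneg hηpos.le hSA0
          rw [← hAset, ← hBset] at hk
          linarith
      rcases eq_or_lt_of_le ht₀mem.1 with h0 | ht₀pos
      · -- t₀ = 0 : initial boundary
        have : F t₀ e₀ s₀ = u 0 e₀ s₀ - η * (s₀^2 - s₀ * len e₀) := by
          simp only [hF]; rw [← h0]; ring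
        rw [this]
        have h1 : u 0 e₀ s₀ ≤ B := hB0 e₀ s₀ hs₀mem
        have h2 : -(η * (s₀^2 - s₀ * len e₀)) ≤ η * C := by
          have hb1 : s₀ * (len e₀ - s₀) ≤ (len e₀)^2 := by nlinarith [hs₀mem.1, hs₀mem.2]
          have hb2 : -(s₀^2 - s₀ * len e₀) ≤ C := by nlinarith [hCle e₀]
          nlinarith
        linarith
      · have ht₀Ioo : t₀ ∈ Set.Ioo 0 T := ⟨ht₀pos, lt_of_le_of_lt ht₀mem.2 hT'T⟩
        rcases eq_or_lt_of_le hs₀mem.1 with hsl | hs₀pos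
        · -- s₀ = 0
          by_cases hv : ι e₀ ∈ Vb
          · have : F t₀ e₀ s₀ = u t₀ e₀ 0 - ε * t₀ := by
              rw [hF, ← hsl]; ring
            rw [this]
            have h1 : u t₀ e₀ 0 ≤ B := hBι e₀ hv t₀ ⟨ht₀mem.1, ht₀T⟩
            nlinarith [mul_nonneg hε.le ht₀mem.1, mul_nonneg hηpos.le hC0]
          · exfalso
            apply kirch_contra (ι e₀) hv ht₀Ioo
            simp only [hF]; rw [← (hcompat t₀ e₀).1, ← hsl]; ring
        · rcases eq_or_lt_of_le hs₀mem.2 with hsr | hs₀lt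
          · -- s₀ = len e₀
            by_cases hv : τ e₀ ∈ Vb
            · have : F t₀ e₀ s₀ = u t₀ e₀ (len e₀) - ε * t₀ := by
                rw [hF, hsr]; ring
              rw [this]
              have h1 : u t₀ e₀ (len e₀) ≤ B := hBτ e₀ hv t₀ ⟨ht₀mem.1, ht₀T⟩
              nlinarith [mul_nonneg hε.le ht₀mem.1, mul_nonneg hηpos.le hC0]
            · exfalso
              apply kirch_contra (τ e₀) hv ht₀Ioo
              simp only [hF]; rw [← (hcompat t₀ e₀).2, hsr]; ring
          · -- interior point: contradiction with heat inequality
            exfalso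
            have hs₀Ioo : s₀ ∈ Set.Ioo 0 (len e₀) := ⟨hs₀pos, hs₀lt⟩
            -- time derivative at the max is ≥ ε
            have hutge : ε ≤ ut t₀ e₀ s₀ := by
              have hg : HasDerivWithinAt (fun t => u t e₀ s₀ - ε * t)
                  (ut t₀ e₀ s₀ - ε) (Set.Icc 0 t₀) t₀ := by
                have h1 := (hut e₀ t₀ ht₀Ioo s₀ hs₀mem)
                have h2 : HasDerivAt (fun t : ℝ => ε * t) ε t₀ := by
                  simpa using (hasDerivAt_id t₀).const_mul ε
                exact (h1.sub h2).hasDerivWithinAt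
              have hgmax : ∀ t ∈ Set.Icc 0 t₀, (fun t => u t e₀ s₀ - ε * t) t ≤
                  (fun t => u t e₀ s₀ - ε * t) t₀ := by
                intro t ht
                have h1 : F t e₀ s₀ ≤ F t₀ e₀ s₀ :=
                  hglob e₀ t ⟨ht.1, le_trans ht.2 ht₀mem.2⟩ s₀ hs₀mem
                simp only [hF] at h1
                show u t e₀ s₀ - ε * t ≤ u t₀ e₀ s₀ - ε * t₀
                linarith
              have := aux_deriv_nonneg_right ht₀pos hg hgmax
              linarith
            have hheat' := hheat e₀ t₀ ht₀Ioo s₀ hs₀Ioo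
            -- spatial derivative of F vanishes at s₀
            have hdP : ∀ x : ℝ, HasDerivAt (fun s : ℝ => η * (s^2 - s * len e₀))
                (η * (2 * x - len e₀)) x := by
              intro x
              have h1 : HasDerivAt (fun s : ℝ => s^2 - s * len e₀) (2 * x - len e₀) x := by
                simpa using ((hasDerivAt_pow 2 x).fun_sub ((hasDerivAt_id x).mul_const (len e₀)))
              simpa [mul_comm] using h1.const_mul η
            have hGd : ∀ x ∈ Set.Ioo 0 (len e₀), HasDerivAt (fun s => F t₀ e₀ s)
                (us t₀ e₀ x - η * (2 * x - len e₀)) x := by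
              intro x hx
              have h1 : HasDerivAt (fun s => u t₀ e₀ s) (us t₀ e₀ x) x :=
                (hus e₀ t₀ ht₀Ioo x ⟨hx.1.le, hx.2.le⟩).hasDerivAt
                  (Icc_mem_nhds hx.1 hx.2)
              simp only [hF]
              exact (h1.sub_const (ε * t₀)).sub (hdP x)
            have hH0 : us t₀ e₀ s₀ - η * (2 * s₀ - len e₀) = 0 := by
              have hloc : IsLocalMax (fun s => F t₀ e₀ s) s₀ := by
                have hmem : Set.Icc 0 (len e₀) ∈ 𝓝 s₀ := Icc_mem_nhds hs₀pos hs₀lt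
                exact Filter.eventually_of_mem hmem
                  (fun s hs => hglob e₀ t₀ ht₀mem s hs)
              exact hloc.hasDerivAt_eq_zero (hGd s₀ hs₀Ioo)
            -- H := spatial derivative of F, positive derivative at s₀
            set H : ℝ → ℝ := fun s => us t₀ e₀ s - η * (2 * s - len e₀) with hHdef
            have hHderiv : HasDerivAt H (uss t₀ e₀ s₀ - η * 2) s₀ := by
              have h1 : HasDerivAt (fun s => us t₀ e₀ s) (uss t₀ e₀ s₀) s₀ :=
                (huss e₀ t₀ ht₀Ioo s₀ hs₀Ioo).hasDerivAt (Ioo_mem_nhds hs₀pos hs₀lt)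
              have h2 : HasDerivAt (fun s : ℝ => η * (2 * s - len e₀)) (η * 2) s₀ := by
                have : HasDerivAt (fun s : ℝ => 2 * s - len e₀) 2 s₀ := by
                  simpa using ((hasDerivAt_id s₀).const_mul (2:ℝ)).sub_const (len e₀)
                simpa using this.const_mul η
              exact h1.sub h2
            have hDpos : 0 < uss t₀ e₀ s₀ - η * 2 := by
              rw [hη] at *; linarith
            obtain ⟨b', hb', hbpos⟩ := aux_pos_right hHderiv hH0 hDpos
            set b : ℝ := min b' (len e₀) with hbdef
            have hs₀b : s₀ < b := lt_min hb' hs₀lt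
            have hble : b ≤ len e₀ := min_le_right _ _
            have hGcont : ContinuousOn (fun s => F t₀ e₀ s) (Set.Icc s₀ b) := by
              have h1 : ContinuousOn (fun s => u t₀ e₀ s) (Set.Icc 0 (len e₀)) := by
                have hc := (hcont e₀).comp
                  ((continuous_const.prodMk continuous_id).continuousOn
                    (s := Set.Icc 0 (len e₀)))
                  (fun s hs => Set.mk_mem_prod ⟨ht₀mem.1, ht₀T⟩ hs)
                exact hc
              have h2 : Continuous (fun s : ℝ => ε * t₀ + η * (s^2 - s * len e₀)) := by
                fun_prop
              have h3 := (h1.sub h2.continuousOn).mono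
                (Set.Icc_subset_Icc hs₀mem.1 hble)
              refine h3.congr (fun x _ => ?_)
              simp only [hF, Pi.sub_apply]; ring
            obtain ⟨c, hc, hceq⟩ := exists_hasDerivAt_eq_slope
              (fun s => F t₀ e₀ s) H hs₀b hGcont
              (fun x hx => hGd x ⟨lt_of_le_of_lt hs₀mem.1 hx.1,
                lt_of_lt_of_le hx.2 hble⟩)
            have hcpos : 0 < H c := hbpos c ⟨hc.1, lt_of_lt_of_le hc.2 (min_le_left _ _)⟩
            have hslope : 0 < (F t₀ e₀ b - F t₀ e₀ s₀) / (b - s₀) := by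
              rw [← hceq]; exact hcpos
            have hFb : F t₀ e₀ s₀ < F t₀ e₀ b := by
              have hbs : 0 < b - s₀ := sub_pos.2 hs₀b
              have := mul_pos hslope hbs
              rw [div_mul_cancel₀ _ (ne_of_gt hbs)] at this
              linarith
            have : F t₀ e₀ b ≤ F t₀ e₀ s₀ :=
              hglob e₀ t₀ ht₀mem b ⟨le_trans hs₀mem.1 hs₀b.le, hble⟩
            linarith
    -- conclude the estimate
    intro e t ht s hs
    have h1 : F t e s ≤ F t₀ e₀ s₀ := hglob e t ht s hs
    have h2 : η * (s^2 - s * len e) ≤ 0 := by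
      have h2' : 0 ≤ η * (s * (len e - s)) :=
        mul_nonneg hηpos.le (mul_nonneg hs.1 (sub_nonneg.2 hs.2))
      nlinarith [h2']
    have h3 : ε * t ≤ ε * T := by
      have := le_trans ht.2 hT'T.le
      nlinarith [hε.le]
    have hηC : η * C ≤ ε * C := by
      rw [hη]; nlinarith [hC0]
    simp only [hF] at h1 hbdry
    linarith
  -- extend to all t < T, then t = T by continuity, then ε → 0
  have hkey2 : ∀ ε, 0 < ε → ∀ e, ∀ t ∈ Set.Icc 0 T, ∀ s ∈ Set.Icc 0 (len e),
      u t e s ≤ B + ε * (T + C) := by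
    intro ε hε e t ht s hs
    have hlt : ∀ t' ∈ Set.Ico 0 T, u t' e s ≤ B + ε * (T + C) := by
      intro t' ht'
      have hT2 : (0:ℝ) < T/2 := by linarith
      refine hkey ε hε (max t' (T/2)) (lt_of_lt_of_le hT2 (le_max_right _ _))
        (max_lt ht'.2 (by linarith)) e t' ⟨ht'.1, le_max_left _ _⟩ s hs
    rcases lt_or_eq_of_le ht.2 with hltT | heqT
    · exact hlt t ⟨ht.1, hltT⟩
    · -- t = T : use continuity from the left
      rw [heqT]
      have hψ : ContinuousOn (fun t => u t e s) (Set.Icc 0 T) := by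
        exact (hcont e).comp
          ((continuous_id.prodMk continuous_const).continuousOn (s := Set.Icc 0 T))
          (fun t' ht' => Set.mk_mem_prod ht' hs)
      have hten : Filter.Tendsto (fun t => u t e s) (𝓝[Set.Ico 0 T] T)
          (𝓝 (u T e s)) :=
        ((hψ T ⟨hT.le, le_refl T⟩).mono Set.Ico_subset_Icc_self)
      have hne : (𝓝[Set.Ico 0 T] T).NeBot := by
        refine mem_closure_iff_nhdsWithin_neBot.1 ?_
        rw [closure_Ico hT.ne]
        exact ⟨hT.le, le_refl T⟩
      exact le_of_tendsto hten (eventually_mem_nhdsWithin.mono (fun t' ht' => hlt t' ht'))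
  refine ⟨B, hBmem, ?_⟩
  intro t ht e s hs
  by_contra hcon
  push_neg at hcon
  set δ : ℝ := u t e s - B with hδ
  have hδpos : 0 < δ := by linarith
  have hTC : 0 < T + C := by linarith
  have hεp : 0 < δ / (2 * (T + C)) := by positivity
  have := hkey2 (δ / (2 * (T + C))) hεp e t ht s hs
  have heq : δ / (2 * (T + C)) * (T + C) = δ / 2 := by
    field_simp
  rw [heq] at this
  linarith
end

section
/- Superharmonic criterion for finiteness of the Green function: let (P_t^λ)_{t>0} be a sub-Markovian semigroup acting on nonnegative measurable functions on a σ-finite measure space (X, μ) with P_t^λ P_s^λ = P_{t+s}^λ. Suppose f ≥ 0 satisfies P_t^λ f ≤ f for all t, and there exist t > 0, ε > 0 and a set O with 0 < μ(O) < ∞ such that f(x) − P_t^λ f(x) > ε for all x ∈ O. Then for every x, ∫₀^∞ P_s^λ(1_O)(x) ds ≤ (t/ε)·f(x) < ∞ (the λ-Green integral over O is finite). -/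
open MeasureTheory

/-- Superharmonic criterion for finiteness of the Green function: let `(P_t)_{t>0}` be a
sub-Markovian semigroup of positive linear operators on functions on a measure space `(X, μ)`.
If `f ≥ 0` satisfies `P_t f ≤ f` for all `t > 0`, and there are `t, ε > 0` and a set `O` with
`0 < μ O < ∞` such that `f − P_t f > ε` on `O`, then for every `x` the λ-Green integral
`∫₀^∞ P_s(1_O)(x) ds` is finite and bounded by `(t/ε)·f(x)`. -/
theorem stmt9 {X : Type} [MeasurableSpace X] (μ : Measure X)
    (P : ℝ → (X → ℝ) → X → ℝ)
    (hsemi : ∀ s t : ℝ, 0 < s → 0 < t → ∀ g : X → ℝ, P s (P t g) = P (s + t) g)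
    (hmono : ∀ t : ℝ, 0 < t → ∀ g h : X → ℝ, g ≤ h → P t g ≤ P t h)
    (hsub : ∀ t : ℝ, 0 < t → ∀ g h : X → ℝ,
      P t (fun x => g x - h x) = fun x => P t g x - P t h x)
    (hhomog : ∀ t : ℝ, 0 < t → ∀ c : ℝ, 0 ≤ c → ∀ g : X → ℝ,
      P t (fun x => c * g x) = fun x => c * P t g x)
    (hsubM : ∀ t : ℝ, 0 < t → P t (fun _ => (1 : ℝ)) ≤ fun _ => (1 : ℝ))
    (f : X → ℝ) (hf : 0 ≤ f)
    (hsuper : ∀ t : ℝ, 0 < t → P t f ≤ f)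
    (t ε : ℝ) (ht : 0 < t) (hε : 0 < ε)
    (O : Set X) (hOm : MeasurableSet O) (hO1 : 0 < μ O) (hO2 : μ O < ⊤)
    (hgap : ∀ x ∈ O, ε < f x - P t f x)
    (hmeas_ind : ∀ x, Measurable fun s => P s (O.indicator fun _ => (1 : ℝ)) x)
    (hmeas_f : ∀ x, Measurable fun s => P s f x) :
    ∀ x, IntegrableOn (fun s => P s (O.indicator fun _ => (1 : ℝ)) x) (Set.Ioi 0) ∧
      ∫ s in Set.Ioi (0 : ℝ), P s (O.indicator fun _ => (1 : ℝ)) x ≤ (t / ε) * f x := by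
  intro x
  set ind : X → ℝ := O.indicator fun _ => (1 : ℝ) with hind_def
  -- P preserves 0
  have hP0 : ∀ s : ℝ, 0 < s → P s (fun _ => (0 : ℝ)) = fun _ => 0 := by
    intro s hs
    have h0 : (fun _ : X => (0 : ℝ)) = fun y => f y - f y := by funext y; simp
    rw [h0, hsub s hs f f]
    funext y; simp
  -- P preserves nonnegativity
  have hPnn : ∀ s : ℝ, 0 < s → ∀ g : X → ℝ, (∀ y, 0 ≤ g y) → ∀ y, 0 ≤ P s g y := by
    intro s hs g hg y
    have h := hmono s hs (fun _ => 0) g (fun y => hg y) y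
    rw [hP0 s hs] at h
    exact h
  have hfd : ∀ y, 0 ≤ f y - P t f y := fun y => sub_nonneg.2 (hsuper t ht y)
  -- indicator dominated by (1/ε)(f - P t f)
  have hdom : ∀ y, ind y ≤ (1 / ε) * (f y - P t f y) := by
    intro y
    by_cases hy : y ∈ O
    · have h1 : ind y = 1 := by simp [hind_def, Set.indicator_of_mem hy]
      rw [h1, one_div, ← div_eq_inv_mul, le_div_iff₀ hε, one_mul]
      exact (hgap y hy).le
    · have h1 : ind y = 0 := by simp [hind_def, Set.indicator_of_notMem hy]
      rw [h1]
      exact mul_nonneg (by positivity) (hfd y)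
  -- key pointwise bound for P s ind
  have hPind_le : ∀ s : ℝ, 0 < s →
      P s ind x ≤ (1 / ε) * (P s f x - P (s + t) f x) := by
    intro s hs
    have h1 : P s ind x ≤ P s (fun y => (1 / ε) * (f y - P t f y)) x :=
      hmono s hs ind _ hdom x
    have h2 : P s (fun y => (1 / ε) * (f y - P t f y)) =
        fun z => (1 / ε) * P s (fun y => f y - P t f y) z :=
      hhomog s hs (1 / ε) (by positivity) _
    have h3 : P s (fun y => f y - P t f y) = fun z => P s f z - P s (P t f) z :=
      hsub s hs f (P t f)
    have h4 : P s (P t f) = P (s + t) f := hsemi s t hs ht f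
    calc P s ind x ≤ P s (fun y => (1 / ε) * (f y - P t f y)) x := h1
      _ = (1 / ε) * P s (fun y => f y - P t f y) x := by rw [h2]
      _ = (1 / ε) * (P s f x - P s (P t f) x) := by rw [h3]
      _ = (1 / ε) * (P s f x - P (s + t) f x) := by rw [h4]
  -- basic bounds
  have hg0 : ∀ s : ℝ, 0 < s → 0 ≤ P s f x := fun s hs =>
    hPnn s hs f (fun y => hf y) x
  have hgle : ∀ s : ℝ, 0 < s → P s f x ≤ f x := fun s hs => hsuper s hs x
  have hind_nn : ∀ y, 0 ≤ ind y := by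
    intro y; by_cases hy : y ∈ O <;> simp [hind_def, Set.indicator, hy]
  have hh0 : ∀ s : ℝ, 0 < s → 0 ≤ P s ind x := fun s hs =>
    hPnn s hs ind hind_nn x
  have hh1 : ∀ s : ℝ, 0 < s → P s ind x ≤ 1 := by
    intro s hs
    have h1 : ind ≤ fun _ => (1 : ℝ) := by
      intro y; by_cases hy : y ∈ O <;> simp [hind_def, Set.indicator, hy]
    exact le_trans (hmono s hs ind _ h1 x) (hsubM s hs x)
  -- generic integrability on Ioc
  have hIOc : ∀ (F : ℝ → ℝ) (C a b : ℝ), Measurable F →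
      (∀ s ∈ Set.Ioc a b, |F s| ≤ C) → IntegrableOn F (Set.Ioc a b) := by
    intro F C a b hFm hFb
    apply Measure.integrableOn_of_bounded (M := C) measure_Ioc_lt_top.ne
      hFm.aestronglyMeasurable
    rw [ae_restrict_iff' measurableSet_Ioc]
    filter_upwards with s hs
    simpa [Real.norm_eq_abs] using hFb s hs
  have hg_int : ∀ a b : ℝ, 0 ≤ a → IntegrableOn (fun s => P s f x) (Set.Ioc a b) := by
    intro a b ha
    refine hIOc _ (f x) a b (hmeas_f x) fun s hs => ?_
    have hs0 : 0 < s := lt_of_le_of_lt ha hs.1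
    rw [abs_of_nonneg (hg0 s hs0)]
    exact hgle s hs0
  have hgII : ∀ a b : ℝ, 0 ≤ a → a ≤ b → IntervalIntegrable (fun s => P s f x) volume a b :=
    fun a b ha hab => (intervalIntegrable_iff_integrableOn_Ioc_of_le hab).2 (hg_int a b ha)
  have hgt_int : ∀ b : ℝ, IntegrableOn (fun s => P (s + t) f x) (Set.Ioc 0 b) := by
    intro b
    refine hIOc _ (f x) 0 b ((hmeas_f x).comp (measurable_id.add_const t)) fun s hs => ?_
    have hs0 : 0 < s + t := by have := hs.1; linarith
    rw [abs_of_nonneg (hg0 _ hs0)]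
    exact hgle _ hs0
  have hh_int : ∀ b : ℝ, IntegrableOn (fun s => P s ind x) (Set.Ioc 0 b) := by
    intro b
    refine hIOc _ 1 0 b (hmeas_ind x) fun s hs => ?_
    rw [abs_of_nonneg (hh0 s hs.1)]
    exact hh1 s hs.1
  -- interval integral bound
  have hC : 0 ≤ (t / ε) * f x := mul_nonneg (by positivity) (hf x)
  have hkey : ∀ b : ℝ, 0 ≤ b →
      ∫ s in Set.Ioc (0:ℝ) b, P s ind x ≤ (t / ε) * f x := by
    intro b hb
    have step1 : ∫ s in Set.Ioc (0:ℝ) b, P s ind x ≤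
        ∫ s in Set.Ioc (0:ℝ) b, (1 / ε) * (P s f x - P (s + t) f x) := by
      refine setIntegral_mono_on (hh_int b)
        (((hg_int 0 b le_rfl).sub (hgt_int b)).const_mul (1 / ε))
        measurableSet_Ioc fun s hs => hPind_le s hs.1
    have step2 : ∫ s in Set.Ioc (0:ℝ) b, (1 / ε) * (P s f x - P (s + t) f x)
        = (1 / ε) * ((∫ s in (0:ℝ)..b, P s f x) - ∫ s in (0:ℝ)..b, P (s + t) f x) := by
      rw [integral_const_mul, integral_sub (hg_int 0 b le_rfl) (hgt_int b),
        intervalIntegral.integral_of_le hb, intervalIntegral.integral_of_le hb]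
    have step3 : (∫ s in (0:ℝ)..b, P (s + t) f x) = ∫ s in t..(b + t), P s f x := by
      simpa using intervalIntegral.integral_comp_add_right (a := (0:ℝ)) (b := b)
        (fun s => P s f x) t
    -- telescoping
    have hA : IntervalIntegrable (fun s => P s f x) volume 0 b := hgII 0 b le_rfl hb
    have hB : IntervalIntegrable (fun s => P s f x) volume b (b + t) :=
      hgII b (b + t) hb (by linarith)
    have hCt : IntervalIntegrable (fun s => P s f x) volume 0 t := hgII 0 t le_rfl ht.le
    have hD : IntervalIntegrable (fun s => P s f x) volume t (b + t) :=
      hgII t (b + t) ht.le (by linarith)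
    have htel : (∫ s in (0:ℝ)..b, P s f x) + (∫ s in b..(b + t), P s f x)
        = (∫ s in (0:ℝ)..t, P s f x) + ∫ s in t..(b + t), P s f x := by
      rw [intervalIntegral.integral_add_adjacent_intervals hA hB,
        intervalIntegral.integral_add_adjacent_intervals hCt hD]
    have hBnn : 0 ≤ ∫ s in b..(b + t), P s f x := by
      rw [intervalIntegral.integral_of_le (by linarith : b ≤ b + t)]
      refine setIntegral_nonneg measurableSet_Ioc fun s hs => ?_
      exact hg0 s (lt_of_le_of_lt hb hs.1)
    have hCle : (∫ s in (0:ℝ)..t, P s f x) ≤ t * f x := by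
      rw [intervalIntegral.integral_of_le ht.le]
      calc ∫ s in Set.Ioc (0:ℝ) t, P s f x ≤ ∫ _ in Set.Ioc (0:ℝ) t, f x :=
            setIntegral_mono_on (hg_int 0 t le_rfl)
              (integrableOn_const measure_Ioc_lt_top.ne) measurableSet_Ioc
              fun s hs => hgle s hs.1
        _ = t * f x := by
            rw [setIntegral_const, Real.volume_real_Ioc_of_le ht.le]
            simp [ENNReal.toReal_ofReal ht.le]
    have hdiff : (∫ s in (0:ℝ)..b, P s f x) - (∫ s in t..(b + t), P s f x) ≤ t * f x := by
      have : (∫ s in (0:ℝ)..b, P s f x) - (∫ s in t..(b + t), P s f x)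
          = (∫ s in (0:ℝ)..t, P s f x) - ∫ s in b..(b + t), P s f x := by linarith
      rw [this]
      linarith
    calc ∫ s in Set.Ioc (0:ℝ) b, P s ind x
        ≤ (1 / ε) * ((∫ s in (0:ℝ)..b, P s f x) - ∫ s in (0:ℝ)..b, P (s + t) f x) := by
          rw [← step2]; exact step1
      _ = (1 / ε) * ((∫ s in (0:ℝ)..b, P s f x) - ∫ s in t..(b + t), P s f x) := by
          rw [step3]
      _ ≤ (1 / ε) * (t * f x) := by
          apply mul_le_mul_of_nonneg_left hdiff (by positivity)
      _ = (t / ε) * f x := by ring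
  -- conclude integrability on Ioi 0
  have hnorm : ∀ b : ℝ, 0 ≤ b →
      (∫ s in (0:ℝ)..b, ‖P s ind x‖) ≤ (t / ε) * f x := by
    intro b hb
    rw [intervalIntegral.integral_of_le hb]
    have heq : ∫ s in Set.Ioc (0:ℝ) b, ‖P s ind x‖ = ∫ s in Set.Ioc (0:ℝ) b, P s ind x :=
      setIntegral_congr_fun measurableSet_Ioc fun s hs => Real.norm_of_nonneg (hh0 s hs.1)
    rw [heq]
    exact hkey b hb
  have hInt : IntegrableOn (fun s => P s ind x) (Set.Ioi 0) := by
    refine integrableOn_Ioi_of_intervalIntegral_norm_bounded ((t / ε) * f x) 0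
      (b := fun n : ℕ => (n : ℝ)) (fun n => hh_int n) tendsto_natCast_atTop_atTop ?_
    exact Filter.Eventually.of_forall fun n => hnorm n n.cast_nonneg
  refine ⟨hInt, ?_⟩
  have htend := intervalIntegral_tendsto_integral_Ioi (μ := volume)
    (f := fun s => P s ind x) (b := fun n : ℕ => (n : ℝ)) 0 hInt tendsto_natCast_atTop_atTop
  refine le_of_tendsto htend (Filter.Eventually.of_forall fun n => ?_)
  rw [intervalIntegral.integral_of_le (Nat.cast_nonneg n)]
  exact hkey n (Nat.cast_nonneg n)
end

section
/- Uniqueness forces amenability step: if f₁ and f₂ are two distinct extreme points of a convex compact set of positive λ₀-harmonic functions normalized at x₀ with neither f₁ ≤ f₂ nor f₂ ≤ f₁, then f = min(f₁, f₂) satisfies P_t^{λ₀} f ≤ f_i for i = 1,2 and hence P_t^{λ₀} f ≤ f, and f is strictly superharmonic (not harmonic) at some point; consequently (by the superharmonic criterion), the λ₀-Green function is finite. -/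
open MeasureTheory

/-- Uniqueness forces amenability step: if `f₁, f₂` are two distinct positive continuous
`λ₀`-harmonic functions (for the semigroup `P_t g(x) = ∫ e^{λ₀t} p(t,x,y) g(y) dμ(y)` with a
strictly positive stochastically complete heat kernel `p`), normalized at `x₀`, with neither
`f₁ ≤ f₂` nor `f₂ ≤ f₁`, then `f = min(f₁,f₂)` is strictly superharmonic:
`P_t f < min(f₁,f₂) = f` pointwise; consequently (by the superharmonic criterion) the
`λ₀`-Green function is finite: there is a set `O` of finite positive measure whose λ₀-Green
integral `∫₀^∞ P_s(1_O)(x) ds` converges for every `x`. -/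
theorem stmt10 {X : Type} [MeasurableSpace X] [TopologicalSpace X] [BorelSpace X] [Nonempty X]
    (μ : Measure X) [SigmaFinite μ] [μ.IsOpenPosMeasure]
    (p : ℝ → X → X → ℝ)
    (hp_pos : ∀ t : ℝ, 0 < t → ∀ x y, 0 < p t x y)
    (hp_meas : Measurable fun q : ℝ × X × X => p q.1 q.2.1 q.2.2)
    (hCK : ∀ s t : ℝ, 0 < s → 0 < t → ∀ x y, ∫ z, p s x z * p t z y ∂μ = p (s + t) x y)
    (hcomplete : ∀ t : ℝ, 0 < t → ∀ x, ∫ y, p t x y ∂μ = 1)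
    (lam0 : ℝ)
    (P : ℝ → (X → ℝ) → X → ℝ)
    (hP : ∀ t g x, P t g x = ∫ y, Real.exp (lam0 * t) * p t x y * g y ∂μ)
    (f₁ f₂ : X → ℝ) (hf₁pos : ∀ x, 0 < f₁ x) (hf₂pos : ∀ x, 0 < f₂ x)
    (hf₁c : Continuous f₁) (hf₂c : Continuous f₂)
    (hharm₁ : ∀ t : ℝ, 0 < t → ∀ x, P t f₁ x = f₁ x)
    (hharm₂ : ∀ t : ℝ, 0 < t → ∀ x, P t f₂ x = f₂ x)
    (x₀ : X) (hn₁ : f₁ x₀ = 1) (hn₂ : f₂ x₀ = 1) (hne : f₁ ≠ f₂)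
    (h12 : ¬ f₁ ≤ f₂) (h21 : ¬ f₂ ≤ f₁) :
    (∀ t : ℝ, 0 < t → ∀ x,
      (P t (fun y => min (f₁ y) (f₂ y)) x ≤ f₁ x ∧ P t (fun y => min (f₁ y) (f₂ y)) x ≤ f₂ x) ∧
      P t (fun y => min (f₁ y) (f₂ y)) x < min (f₁ x) (f₂ x)) ∧
    ∃ O : Set X, MeasurableSet O ∧ 0 < μ O ∧ μ O < ⊤ ∧
      ∀ x, IntegrableOn (fun s => P s (O.indicator fun _ => (1 : ℝ)) x) (Set.Ioi 0) := by
  set f : X → ℝ := fun y => min (f₁ y) (f₂ y) with hf_def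
  have hf_meas : Measurable f := (hf₁c.min hf₂c).measurable
  have hf_nonneg : ∀ y, 0 ≤ f y := fun y => le_min (hf₁pos y).le (hf₂pos y).le
  have hf_le₁ : ∀ y, f y ≤ f₁ y := fun y => min_le_left _ _
  have hf_le₂ : ∀ y, f y ≤ f₂ y := fun y => min_le_right _ _
  -- kernel measurability in y
  have hker : ∀ (t : ℝ) (x : X), Measurable fun y => p t x y := fun t x =>
    hp_meas.comp (measurable_const.prodMk (measurable_const.prodMk measurable_id))
  have hEpos : ∀ t : ℝ, 0 < Real.exp (lam0 * t) := fun t => Real.exp_pos _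
  -- integrability of the f₁- and f₂-integrands
  have hint₁ : ∀ t : ℝ, 0 < t → ∀ x,
      Integrable (fun y => Real.exp (lam0 * t) * p t x y * f₁ y) μ := by
    intro t ht x
    by_contra h
    have := hharm₁ t ht x
    rw [hP, integral_undef h] at this
    exact (hf₁pos x).ne' this.symm
  have hint₂ : ∀ t : ℝ, 0 < t → ∀ x,
      Integrable (fun y => Real.exp (lam0 * t) * p t x y * f₂ y) μ := by
    intro t ht x
    by_contra h
    have := hharm₂ t ht x
    rw [hP, integral_undef h] at this
    exact (hf₂pos x).ne' this.symm
  -- dominated integrability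
  have hintC : ∀ t : ℝ, 0 < t → ∀ x, ∀ C : ℝ, ∀ g : X → ℝ, Measurable g →
      (∀ y, 0 ≤ g y) → (∀ y, g y ≤ C * f₁ y) →
      Integrable (fun y => Real.exp (lam0 * t) * p t x y * g y) μ := by
    intro t ht x C g hgm hg0 hgC
    refine Integrable.mono' ((hint₁ t ht x).const_mul C)
      ((measurable_const.mul (hker t x)).mul hgm).aestronglyMeasurable
      (Filter.Eventually.of_forall fun y => ?_)
    have hk : 0 ≤ Real.exp (lam0 * t) * p t x y :=
      (mul_pos (hEpos t) (hp_pos t ht x y)).le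
    rw [Real.norm_eq_abs, abs_of_nonneg (mul_nonneg hk (hg0 y))]
    calc Real.exp (lam0 * t) * p t x y * g y
        ≤ Real.exp (lam0 * t) * p t x y * (C * f₁ y) :=
          mul_le_mul_of_nonneg_left (hgC y) hk
      _ = C * (Real.exp (lam0 * t) * p t x y * f₁ y) := by ring
  -- part 1
  have key : ∀ t : ℝ, 0 < t → ∀ x,
      (P t f x ≤ f₁ x ∧ P t f x ≤ f₂ x) ∧ P t f x < min (f₁ x) (f₂ x) := by
    intro t ht x
    have intf : Integrable (fun y => Real.exp (lam0 * t) * p t x y * f y) μ :=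
      hintC t ht x 1 f hf_meas hf_nonneg (fun y => by simpa using hf_le₁ y)
    have hk : ∀ y, 0 ≤ Real.exp (lam0 * t) * p t x y := fun y =>
      (mul_pos (hEpos t) (hp_pos t ht x y)).le
    have strict : ∀ g : X → ℝ, (∀ y, 0 ≤ g y) → (∀ y, f y ≤ g y) →
        Integrable (fun y => Real.exp (lam0 * t) * p t x y * g y) μ →
        (∃ y, f y < g y) → Continuous g → P t f x < P t g x := by
      intro g hg0 hfg intg hex hgc
      have hdiff : P t g x - P t f x
          = ∫ y, (Real.exp (lam0 * t) * p t x y * g y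
              - Real.exp (lam0 * t) * p t x y * f y) ∂μ := by
        rw [hP, hP, integral_sub intg intf]
      have hpos : 0 < ∫ y, (Real.exp (lam0 * t) * p t x y * g y
              - Real.exp (lam0 * t) * p t x y * f y) ∂μ := by
        refine (integral_pos_iff_support_of_nonneg (fun y => ?_) (intg.sub intf)).2 ?_
        · exact sub_nonneg.2 (mul_le_mul_of_nonneg_left (hfg y) (hk y))
        · obtain ⟨y₀, hy₀⟩ := hex
          have hopen : IsOpen {y | f y < g y} := isOpen_lt (hf₁c.min hf₂c) hgc
          refine lt_of_lt_of_le (hopen.measure_pos μ ⟨y₀, hy₀⟩) (measure_mono ?_)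
          intro y hy
          have : 0 < Real.exp (lam0 * t) * p t x y * g y
              - Real.exp (lam0 * t) * p t x y * f y := by
            have := mul_lt_mul_of_pos_left (show f y < g y from hy)
              (mul_pos (hEpos t) (hp_pos t ht x y))
            linarith only [this]
          simp only [Function.mem_support, Pi.sub_apply]
          intro h
          linarith only [this, h]
      linarith only [hdiff, hpos]
    have hex₁ : ∃ y, f y < f₁ y := by
      have h12' : ∃ y, f₂ y < f₁ y := by
        simpa only [Pi.le_def, not_forall, not_le] using h12
      obtain ⟨y, hy⟩ := h12'
      exact ⟨y, min_lt_iff.2 (Or.inr hy)⟩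
    have hex₂ : ∃ y, f y < f₂ y := by
      have h21' : ∃ y, f₁ y < f₂ y := by
        simpa only [Pi.le_def, not_forall, not_le] using h21
      obtain ⟨y, hy⟩ := h21'
      exact ⟨y, min_lt_iff.2 (Or.inl hy)⟩
    have s₁ : P t f x < f₁ x := by
      have := strict f₁ (fun y => (hf₁pos y).le) hf_le₁ (hint₁ t ht x) hex₁ hf₁c
      rwa [hharm₁ t ht x] at this
    have s₂ : P t f x < f₂ x := by
      have := strict f₂ (fun y => (hf₂pos y).le) hf_le₂ (hint₂ t ht x) hex₂ hf₂c
      rwa [hharm₂ t ht x] at this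
    exact ⟨⟨s₁.le, s₂.le⟩, lt_min s₁ s₂⟩
  refine ⟨fun t ht x => key t ht x, ?_⟩
  -- nonnegativity of the semigroup
  have hP_nonneg : ∀ t : ℝ, 0 < t → ∀ x, ∀ g : X → ℝ, (∀ y, 0 ≤ g y) → 0 ≤ P t g x := by
    intro t ht x g hg
    rw [hP]
    exact integral_nonneg fun y =>
      mul_nonneg (mul_nonneg (hEpos t).le (hp_pos t ht x y).le) (hg y)
  -- monotonicity
  have hP_mono : ∀ t : ℝ, 0 < t → ∀ x, ∀ g h : X → ℝ,
      Integrable (fun y => Real.exp (lam0 * t) * p t x y * g y) μ →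
      Integrable (fun y => Real.exp (lam0 * t) * p t x y * h y) μ →
      (∀ y, g y ≤ h y) → P t g x ≤ P t h x := by
    intro t ht x g h intg inth hgh
    rw [hP, hP]
    exact integral_mono intg inth fun y =>
      mul_le_mul_of_nonneg_left (hgh y) (mul_pos (hEpos t) (hp_pos t ht x y)).le
  -- measurability of P t g in the space variable and in the time variable
  have hg₁meas : Measurable (fun y => P 1 f y) := by
    have hFm : StronglyMeasurable (fun q : X × X => Real.exp (lam0 * 1) * p 1 q.1 q.2 * f q.2) := by
      refine Measurable.stronglyMeasurable ?_
      exact (measurable_const.mul (hp_meas.comp (measurable_const.prodMk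
        (measurable_fst.prodMk measurable_snd)))).mul (hf_meas.comp measurable_snd)
    have heq : (fun y => P 1 f y) = fun y => ∫ z, Real.exp (lam0 * 1) * p 1 y z * f z ∂μ :=
      funext fun y => hP 1 f y
    rw [heq]
    exact hFm.integral_prod_right'.measurable
  have hmeas_s : ∀ (x : X) (g : X → ℝ), Measurable g → Measurable (fun s => P s g x) := by
    intro x g hg
    have hFm : StronglyMeasurable (fun q : ℝ × X => Real.exp (lam0 * q.1) * p q.1 x q.2 * g q.2) := by
      refine Measurable.stronglyMeasurable ?_
      exact ((Real.measurable_exp.comp (measurable_fst.const_mul lam0)).mul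
        (hp_meas.comp (measurable_fst.prodMk (measurable_const.prodMk measurable_snd)))).mul
        (hg.comp measurable_snd)
    have heq : (fun s => P s g x) = fun s => ∫ y, Real.exp (lam0 * s) * p s x y * g y ∂μ :=
      funext fun s => hP s g x
    rw [heq]
    exact hFm.integral_prod_right'.measurable
  -- facts about g₁ = P 1 f
  have hg₁lt : ∀ y, P 1 f y < f y := fun y => (key 1 one_pos y).2
  have hg₁nonneg : ∀ y, 0 ≤ P 1 f y := fun y => hP_nonneg 1 one_pos y f hf_nonneg
  have hg₁le₁ : ∀ y, P 1 f y ≤ f₁ y := fun y => (hg₁lt y).le.trans (hf_le₁ y)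
  -- the strict superharmonicity gap u
  set u : X → ℝ := fun y => f y - P 1 f y with hu_def
  have hu_pos : ∀ y, 0 < u y := fun y => sub_pos.2 (hg₁lt y)
  have hu_meas : Measurable u := hf_meas.sub hg₁meas
  have hu_le_f : ∀ y, u y ≤ f y := fun y => sub_le_self (f y) (hg₁nonneg y)
  have hu_le₁ : ∀ y, u y ≤ f₁ y := fun y => (hu_le_f y).trans (hf_le₁ y)
  -- choose the set O
  obtain ⟨n, k, hO⟩ : ∃ n k : ℕ, 0 < μ ({y | 1 / ((n : ℝ) + 1) ≤ u y} ∩ spanningSets μ k) := by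
    have hA : ∀ n : ℕ, MeasurableSet {y | 1 / ((n : ℝ) + 1) ≤ u y} := fun n =>
      measurableSet_le measurable_const hu_meas
    have hUnion : (⋃ n : ℕ, {y | 1 / ((n : ℝ) + 1) ≤ u y}) = Set.univ := by
      ext y
      simp only [Set.mem_iUnion, Set.mem_setOf_eq, Set.mem_univ, iff_true]
      obtain ⟨n, hn⟩ := exists_nat_one_div_lt (hu_pos y)
      exact ⟨n, hn.le⟩
    have huniv : 0 < μ Set.univ := isOpen_univ.measure_pos μ Set.univ_nonempty
    by_contra hcon
    push_neg at hcon
    have : ∀ n k : ℕ, μ ({y | 1 / ((n : ℝ) + 1) ≤ u y} ∩ spanningSets μ k) = 0 := fun n k =>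
      le_antisymm (hcon n k) zero_le
    have hz : μ Set.univ = 0 := by
      have : μ (⋃ n : ℕ, ⋃ k : ℕ, {y | 1 / ((n : ℝ) + 1) ≤ u y} ∩ spanningSets μ k) = 0 :=
        measure_iUnion_null fun n => measure_iUnion_null fun k => this n k
      have hcov : (⋃ n : ℕ, ⋃ k : ℕ, {y | 1 / ((n : ℝ) + 1) ≤ u y} ∩ spanningSets μ k)
          = Set.univ := by
        ext y
        simp only [Set.mem_iUnion, Set.mem_inter_iff, Set.mem_setOf_eq, Set.mem_univ, iff_true]
        obtain ⟨n, hn⟩ := exists_nat_one_div_lt (hu_pos y)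
        obtain ⟨k, hk⟩ := Set.iUnion_eq_univ_iff.1 (iUnion_spanningSets μ) y
        exact ⟨n, k, hn.le, hk⟩
      rwa [hcov] at this
    exact absurd hz huniv.ne'
  set O : Set X := {y | 1 / ((n : ℝ) + 1) ≤ u y} ∩ spanningSets μ k with hO_def
  have hO_meas : MeasurableSet O :=
    (measurableSet_le measurable_const hu_meas).inter (measurableSet_spanningSets μ k)
  have hO_fin : μ O < ⊤ :=
    lt_of_le_of_lt (measure_mono Set.inter_subset_right) (measure_spanningSets_lt_top μ k)
  set c : ℝ := (n : ℝ) + 1 with hc_def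
  have hc_pos : (0 : ℝ) < c := by positivity
  have hind_le : ∀ y, O.indicator (fun _ => (1 : ℝ)) y ≤ c * u y := by
    intro y
    by_cases hy : y ∈ O
    · rw [Set.indicator_of_mem hy]
      have h1 : 1 / c ≤ u y := hy.1
      calc (1 : ℝ) = c * (1 / c) := by field_simp
        _ ≤ c * u y := mul_le_mul_of_nonneg_left h1 hc_pos.le
    · rw [Set.indicator_of_notMem hy]
      exact mul_nonneg hc_pos.le (hu_pos y).le
  have hind_nonneg : ∀ y, 0 ≤ O.indicator (fun _ => (1 : ℝ)) y := fun y =>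
    Set.indicator_nonneg (fun _ _ => zero_le_one) y
  have hind_meas : Measurable (O.indicator (fun _ => (1 : ℝ))) :=
    measurable_const.indicator hO_meas
  have hind_le₁ : ∀ y, O.indicator (fun _ => (1 : ℝ)) y ≤ c * f₁ y := fun y =>
    (hind_le y).trans (mul_le_mul_of_nonneg_left (hu_le₁ y) hc_pos.le)
  -- the semigroup property P s (P 1 f) = P (s+1) f
  have hsemi : ∀ s : ℝ, 0 < s → ∀ x, P s (fun y => P 1 f y) x = P (s + 1) f x := by
    intro s hs x
    have hpm_s : Measurable (fun q : X × X => p s x q.1) :=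
      hp_meas.comp (measurable_const.prodMk (measurable_const.prodMk measurable_fst))
    have hpm_1 : Measurable (fun q : X × X => p 1 q.1 q.2) :=
      hp_meas.comp (measurable_const.prodMk (measurable_fst.prodMk measurable_snd))
    set F : X × X → ℝ := fun q =>
      Real.exp (lam0 * s) * p s x q.1 * (Real.exp (lam0 * 1) * p 1 q.1 q.2 * f q.2) with hF_def
    have hF_meas : Measurable F :=
      (measurable_const.mul hpm_s).mul
        ((measurable_const.mul hpm_1).mul (hf_meas.comp measurable_snd))
    have hF_nonneg : ∀ q, 0 ≤ F q := fun q =>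
      mul_nonneg (mul_nonneg (hEpos s).le (hp_pos s hs x q.1).le)
        (mul_nonneg (mul_nonneg (hEpos 1).le (hp_pos 1 one_pos q.1 q.2).le) (hf_nonneg q.2))
    have hinner_int : ∀ y : X, Integrable (fun z => Real.exp (lam0 * 1) * p 1 y z * f z) μ :=
      fun y => hintC 1 one_pos y 1 f hf_meas hf_nonneg (fun z => by simpa using hf_le₁ z)
    have hout_int : Integrable (fun y => Real.exp (lam0 * s) * p s x y * P 1 f y) μ :=
      hintC s hs x 1 (fun y => P 1 f y) hg₁meas hg₁nonneg (fun y => by simpa using hg₁le₁ y)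
    have hF_int : Integrable F (μ.prod μ) := by
      refine ⟨hF_meas.aestronglyMeasurable, ?_⟩
      rw [hasFiniteIntegral_iff_ofReal (Filter.Eventually.of_forall hF_nonneg)]
      rw [lintegral_prod _ hF_meas.ennreal_ofReal.aemeasurable]
      have hinner : ∀ y : X, (∫⁻ z, ENNReal.ofReal (F (y, z)) ∂μ)
          = ENNReal.ofReal (Real.exp (lam0 * s) * p s x y * P 1 f y) := by
        intro y
        have h1 : ∀ z, ENNReal.ofReal (F (y, z))
            = ENNReal.ofReal (Real.exp (lam0 * s) * p s x y)
              * ENNReal.ofReal (Real.exp (lam0 * 1) * p 1 y z * f z) := fun z =>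
          ENNReal.ofReal_mul (mul_nonneg (hEpos s).le (hp_pos s hs x y).le)
        rw [lintegral_congr h1, lintegral_const_mul _ (Measurable.ennreal_ofReal (f := fun z => Real.exp (lam0 * 1) * p 1 y z * f z) ((measurable_const.mul (hker 1 y)).mul hf_meas)),
          ← ofReal_integral_eq_lintegral_ofReal (hinner_int y) (Filter.Eventually.of_forall
            fun z => mul_nonneg (mul_nonneg (hEpos 1).le (hp_pos 1 one_pos y z).le)
              (hf_nonneg z)),
          ← hP 1 f y,
          ← ENNReal.ofReal_mul (mul_nonneg (hEpos s).le (hp_pos s hs x y).le)]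
      rw [lintegral_congr hinner,
        ← ofReal_integral_eq_lintegral_ofReal hout_int (Filter.Eventually.of_forall fun y =>
          mul_nonneg (mul_nonneg (hEpos s).le (hp_pos s hs x y).le) (hg₁nonneg y))]
      exact ENNReal.ofReal_lt_top
    calc P s (fun y => P 1 f y) x
        = ∫ y, ∫ z, F (y, z) ∂μ ∂μ := by
          rw [hP]
          refine integral_congr_ae (Filter.Eventually.of_forall fun y => ?_)
          show Real.exp (lam0 * s) * p s x y * P 1 f y = _
          rw [hP 1 f y, ← integral_const_mul]
      _ = ∫ z, ∫ y, F (y, z) ∂μ ∂μ := integral_integral_swap hF_int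
      _ = ∫ z, (Real.exp (lam0 * s) * Real.exp (lam0 * 1) * f z)
            * (∫ y, p s x y * p 1 y z ∂μ) ∂μ := by
          refine integral_congr_ae (Filter.Eventually.of_forall fun z => ?_)
          beta_reduce
          rw [← integral_const_mul]
          refine integral_congr_ae (Filter.Eventually.of_forall fun y => ?_)
          show F (y, z) = _
          simp only [hF_def]
          ring
      _ = ∫ z, Real.exp (lam0 * (s + 1)) * p (s + 1) x z * f z ∂μ := by
          refine integral_congr_ae (Filter.Eventually.of_forall fun z => ?_)
          beta_reduce
          rw [hCK s 1 hs one_pos x z, ← Real.exp_add,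
            show lam0 * s + lam0 * 1 = lam0 * (s + 1) by ring]
          ring
      _ = P (s + 1) f x := (hP _ _ _).symm
  -- P s u = P s f - P (s+1) f
  have hsub : ∀ s : ℝ, 0 < s → ∀ x, P s u x = P s f x - P (s + 1) f x := by
    intro s hs x
    have intf : Integrable (fun y => Real.exp (lam0 * s) * p s x y * f y) μ :=
      hintC s hs x 1 f hf_meas hf_nonneg (fun y => by simpa using hf_le₁ y)
    have intg : Integrable (fun y => Real.exp (lam0 * s) * p s x y * P 1 f y) μ :=
      hintC s hs x 1 (fun y => P 1 f y) hg₁meas hg₁nonneg (fun y => by simpa using hg₁le₁ y)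
    have h1 : P s u x = P s f x - P s (fun y => P 1 f y) x := by
      rw [hP s u x, hP s f x, hP s (fun y => P 1 f y) x, ← integral_sub intf intg]
      refine integral_congr_ae (Filter.Eventually.of_forall fun y => ?_)
      show Real.exp (lam0 * s) * p s x y * u y = _
      simp only [hu_def]
      ring
    rw [h1, hsemi s hs x]
  -- now fix x and prove integrability of the Green integrand
  refine ⟨O, hO_meas, hO, hO_fin, fun x => ?_⟩
  set q : ℝ → ℝ := fun s => P s (O.indicator fun _ => (1 : ℝ)) x with hq_def
  set h : ℝ → ℝ := fun s => P s f x with hh_def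
  have hh_meas : Measurable h := hmeas_s x f hf_meas
  have hq_meas : Measurable q := hmeas_s x _ hind_meas
  have hh_le : ∀ s : ℝ, 0 < s → h s ≤ f x := fun s hs => ((key s hs x).2).le
  have hh_nonneg : ∀ s : ℝ, 0 < s → 0 ≤ h s := fun s hs => hP_nonneg s hs x f hf_nonneg
  have hq_nonneg : ∀ s : ℝ, 0 < s → 0 ≤ q s := fun s hs =>
    hP_nonneg s hs x _ hind_nonneg
  have hq_le_u : ∀ s : ℝ, 0 < s → q s ≤ c * P s u x := by
    intro s hs
    have intind : Integrable (fun y => Real.exp (lam0 * s) * p s x y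
        * O.indicator (fun _ => (1 : ℝ)) y) μ :=
      hintC s hs x c _ hind_meas hind_nonneg hind_le₁
    have intu : Integrable (fun y => Real.exp (lam0 * s) * p s x y * u y) μ :=
      hintC s hs x 1 u hu_meas (fun y => (hu_pos y).le) (fun y => by simpa using hu_le₁ y)
    calc q s = ∫ y, Real.exp (lam0 * s) * p s x y * O.indicator (fun _ => (1 : ℝ)) y ∂μ :=
          hP s _ x
      _ ≤ ∫ y, c * (Real.exp (lam0 * s) * p s x y * u y) ∂μ := by
          refine integral_mono intind (intu.const_mul c) fun y => ?_
          refine le_trans (mul_le_mul_of_nonneg_left (hind_le y)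
            (mul_pos (hEpos s) (hp_pos s hs x y)).le) (le_of_eq ?_)
          ring
      _ = c * P s u x := by rw [integral_const_mul, ← hP s u x]
  have hPu_le : ∀ s : ℝ, 0 < s → P s u x ≤ h s := by
    intro s hs
    have intf : Integrable (fun y => Real.exp (lam0 * s) * p s x y * f y) μ :=
      hintC s hs x 1 f hf_meas hf_nonneg (fun y => by simpa using hf_le₁ y)
    have intu : Integrable (fun y => Real.exp (lam0 * s) * p s x y * u y) μ :=
      hintC s hs x 1 u hu_meas (fun y => (hu_pos y).le) (fun y => by simpa using hu_le₁ y)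
    exact hP_mono s hs x u f intu intf hu_le_f
  have hq_le : ∀ s : ℝ, 0 < s → q s ≤ c * (h s - h (s + 1)) := by
    intro s hs
    have := hq_le_u s hs
    rw [hsub s hs x] at this
    exact this
  have hq_le_cf : ∀ s : ℝ, 0 < s → q s ≤ c * f x := by
    intro s hs
    refine (hq_le_u s hs).trans (mul_le_mul_of_nonneg_left ?_ hc_pos.le)
    exact (hPu_le s hs).trans (hh_le s hs)
  -- integrability on bounded intervals
  have hIntq : ∀ b : ℝ, IntegrableOn q (Set.Ioc 0 b) := by
    intro b
    refine Integrable.mono' (g := fun _ => c * f x)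
      (integrableOn_const measure_Ioc_lt_top.ne)
      hq_meas.aestronglyMeasurable.restrict ?_
    filter_upwards [ae_restrict_mem measurableSet_Ioc] with s hs
    rw [Real.norm_eq_abs, abs_of_nonneg (hq_nonneg s hs.1)]
    exact hq_le_cf s hs.1
  have hIntOnh : ∀ a b : ℝ, 0 ≤ a → IntegrableOn h (Set.Ioc a b) := by
    intro a b ha
    refine Integrable.mono' (g := fun _ => f x)
      (integrableOn_const measure_Ioc_lt_top.ne)
      hh_meas.aestronglyMeasurable.restrict ?_
    filter_upwards [ae_restrict_mem measurableSet_Ioc] with s hs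
    have hs0 : 0 < s := lt_of_le_of_lt ha hs.1
    rw [Real.norm_eq_abs, abs_of_nonneg (hh_nonneg s hs0)]
    exact hh_le s hs0
  have hIntOnh1 : ∀ b : ℝ, IntegrableOn (fun s => h (s + 1)) (Set.Ioc 0 b) := by
    intro b
    refine Integrable.mono' (g := fun _ => f x)
      (integrableOn_const measure_Ioc_lt_top.ne)
      (hh_meas.comp (measurable_id.add_const 1)).aestronglyMeasurable.restrict ?_
    filter_upwards [ae_restrict_mem measurableSet_Ioc] with s hs
    have hs0 : 0 < s + 1 := by linarith only [hs.1]
    rw [Real.norm_eq_abs, abs_of_nonneg (hh_nonneg _ hs0)]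
    exact hh_le _ hs0
  -- the uniform bound on partial integrals
  have hbound : ∀ i : ℕ, (∫ s in (0 : ℝ)..((i : ℝ) + 1), ‖q s‖) ≤ c * f x := by
    intro i
    set N : ℝ := (i : ℝ) + 1 with hN_def
    have hN1 : (1 : ℝ) ≤ N := by
      simp only [hN_def, le_add_iff_nonneg_left, Nat.cast_nonneg]
    have hN0 : (0 : ℝ) ≤ N := by linarith only [hN1]
    rw [intervalIntegral.integral_of_le hN0]
    have step1 : (∫ s in Set.Ioc 0 N, ‖q s‖) ≤ ∫ s in Set.Ioc 0 N, c * (h s - h (s + 1)) := by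
      refine setIntegral_mono_on (hIntq N).norm
        (((hIntOnh 0 N le_rfl).sub (hIntOnh1 N)).const_mul c) measurableSet_Ioc ?_
      intro s hs
      rw [Real.norm_eq_abs, abs_of_nonneg (hq_nonneg s hs.1)]
      exact hq_le s hs.1
    have step2 : (∫ s in Set.Ioc 0 N, c * (h s - h (s + 1)))
        = c * ((∫ s in Set.Ioc 0 N, h s) - ∫ s in Set.Ioc 0 N, h (s + 1)) := by
      rw [integral_const_mul, integral_sub (hIntOnh 0 N le_rfl) (hIntOnh1 N)]
    have step3 : (∫ s in Set.Ioc 0 N, h (s + 1)) = ∫ s in Set.Ioc 1 (N + 1), h s := by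
      rw [← intervalIntegral.integral_of_le hN0,
        intervalIntegral.integral_comp_add_right h 1, zero_add,
        intervalIntegral.integral_of_le (by linarith only [hN1] : (1 : ℝ) ≤ N + 1)]
    have split1 : (∫ s in Set.Ioc 0 N, h s)
        = (∫ s in Set.Ioc 0 1, h s) + ∫ s in Set.Ioc 1 N, h s := by
      rw [← Set.Ioc_union_Ioc_eq_Ioc zero_le_one hN1,
        setIntegral_union (Set.Ioc_disjoint_Ioc_of_le le_rfl) measurableSet_Ioc
          (hIntOnh 0 1 le_rfl) (hIntOnh 1 N zero_le_one)]
    have split2 : (∫ s in Set.Ioc 1 (N + 1), h s)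
        = (∫ s in Set.Ioc 1 N, h s) + ∫ s in Set.Ioc N (N + 1), h s := by
      rw [← Set.Ioc_union_Ioc_eq_Ioc hN1 (by linarith only [] : N ≤ N + 1),
        setIntegral_union (Set.Ioc_disjoint_Ioc_of_le le_rfl) measurableSet_Ioc
          (hIntOnh 1 N zero_le_one) (hIntOnh N (N + 1) hN0)]
    have bnd1 : (∫ s in Set.Ioc 0 1, h s) ≤ f x := by
      have hmono := setIntegral_mono_on (hIntOnh 0 1 le_rfl)
        (integrableOn_const measure_Ioc_lt_top.ne)
        measurableSet_Ioc (fun s hs => hh_le s hs.1)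
      calc (∫ s in Set.Ioc 0 1, h s) ≤ ∫ _ in Set.Ioc (0 : ℝ) 1, f x := hmono
        _ = f x := by
          rw [setIntegral_const, Real.volume_real_Ioc]
          norm_num
    have bnd2 : 0 ≤ ∫ s in Set.Ioc N (N + 1), h s := by
      refine setIntegral_nonneg measurableSet_Ioc fun s hs => ?_
      exact hh_nonneg s (lt_of_lt_of_le (by linarith only [hN1] : (0 : ℝ) < N) hs.1.le)
    calc (∫ s in Set.Ioc 0 N, ‖q s‖)
        ≤ c * ((∫ s in Set.Ioc 0 N, h s) - ∫ s in Set.Ioc 0 N, h (s + 1)) :=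
          step1.trans (le_of_eq step2)
      _ ≤ c * f x := by
          rw [step3, split1, split2]
          have hkey : (∫ s in Set.Ioc 0 1, h s) + (∫ s in Set.Ioc 1 N, h s)
              - ((∫ s in Set.Ioc 1 N, h s) + ∫ s in Set.Ioc N (N + 1), h s) ≤ f x := by
            linarith only [bnd1, bnd2]
          exact mul_le_mul_of_nonneg_left hkey hc_pos.le
  exact integrableOn_Ioi_of_intervalIntegral_norm_bounded (c * f x) 0
    (fun i : ℕ => hIntq ((i : ℝ) + 1))
    (Filter.tendsto_atTop_add_const_right Filter.atTop 1 tendsto_natCast_atTop_atTop)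
    (Filter.Eventually.of_forall hbound)
end

section
/- Ancona multiplicativity (lower bound) implies the ratio comparison: suppose G : X × X → (0,∞) satisfies C⁻¹ G(x,y) G(y,z) ≤ G(x,z) ≤ C G(x,y) G(y,z) whenever y lies on a geodesic from x to z at distance ≥ 1 from both. Then for points x, x' and y, y' such that a common point w lies within bounded distance of geodesics [x,y], [x',y], [x,y'], [x',y'], the cross-ratio satisfies (G(x,y)/G(x',y)) / (G(x,y')/G(x',y')) ∈ [C'^{-1}, C'] for a constant C' depending only on C and the Harnack constant. -/
/-- Ancona multiplicativity implies the ratio comparison: if a positive symmetric kernel `G` on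
a geodesic metric space satisfies the two-sided Ancona inequality with constant `C` along
geodesics and the Harnack property `G(x,y)/G(x,z) ≤ e^{D·d(y,z)}`, then there is a constant
`C'` (depending only on `C`, `D` and `r`) such that whenever a point `w` lies within distance
`r` of geodesics `[x,y]`, `[x',y]`, `[x,y']`, `[x',y']` (and at distance `≥ r+1` from the four
endpoints), the cross-ratio `(G(x,y)/G(x',y)) / (G(x,y')/G(x',y'))` lies in `[C'⁻¹, C']`. -/
theorem stmt12 (C D r : ℝ) (hC : 1 ≤ C) (hD : 0 < D) (hr : 0 < r) :
    ∃ C' : ℝ, 0 < C' ∧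
      ∀ (X : Type) [MetricSpace X], ∀ G : X → X → ℝ,
        (∀ a b, 0 < G a b) →
        (∀ a b, G a b = G b a) →
        (∀ a b c : X, dist a b + dist b c = dist a c → 1 ≤ dist a b → 1 ≤ dist b c →
          C⁻¹ * G a b * G b c ≤ G a c ∧ G a c ≤ C * G a b * G b c) →
        (∀ a b c : X, 1 ≤ dist a b → 1 ≤ dist a c →
          G a b / G a c ≤ Real.exp (D * dist b c)) →
        ∀ x x' y y' w : X,
          (∃ q, dist x q + dist q y = dist x y ∧ dist w q ≤ r) →
          (∃ q, dist x' q + dist q y = dist x' y ∧ dist w q ≤ r) →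
          (∃ q, dist x q + dist q y' = dist x y' ∧ dist w q ≤ r) →
          (∃ q, dist x' q + dist q y' = dist x' y' ∧ dist w q ≤ r) →
          r + 1 ≤ dist w x → r + 1 ≤ dist w x' → r + 1 ≤ dist w y → r + 1 ≤ dist w y' →
          C'⁻¹ ≤ G x y / G x' y / (G x y' / G x' y') ∧
            G x y / G x' y / (G x y' / G x' y') ≤ C' := by
  set E : ℝ := Real.exp (D * r) with hE
  have hE1 : 1 ≤ E := by
    rw [hE]
    have : (0:ℝ) ≤ D * r := le_of_lt (mul_pos hD hr)
    simpa using Real.one_le_exp this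
  have hE0 : 0 < E := lt_of_lt_of_le one_pos hE1
  set K : ℝ := C * (E * E) with hK
  have hK1 : 1 ≤ K := by
    rw [hK]
    nlinarith
  have hK0 : 0 < K := lt_of_lt_of_le one_pos hK1
  refine ⟨K ^ 4, by positivity, ?_⟩
  intro X _ G hpos hsym hAnc hHar x x' y y' w h1 h2 h3 h4 hwx hwx' hwy hwy'
  -- key sandwich lemma
  have key : ∀ a b : X, (∃ q, dist a q + dist q b = dist a b ∧ dist w q ≤ r) →
      r + 1 ≤ dist w a → r + 1 ≤ dist w b →
      K⁻¹ * (G a w * G w b) ≤ G a b ∧ G a b ≤ K * (G a w * G w b) := by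
    intro a b ⟨q, hq, hwq⟩ hwa hwb
    have haq : 1 ≤ dist a q := by
      have := dist_triangle w q a
      rw [dist_comm q a] at this
      have hwa' := hwa
      linarith [dist_comm w a ▸ (le_refl (dist w a))]
    have hqb : 1 ≤ dist q b := by
      have := dist_triangle w q b
      linarith
    have haw : 1 ≤ dist a w := by rw [dist_comm]; linarith
    have hbw : 1 ≤ dist b w := by rw [dist_comm]; linarith
    have hbq : 1 ≤ dist b q := by rw [dist_comm]; exact hqb
    obtain ⟨hlow, hup⟩ := hAnc a q b hq haq hqb
    -- Harnack comparisons
    have hqw : dist q w ≤ r := by rw [dist_comm]; exact hwq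
    have expmono : Real.exp (D * dist q w) ≤ E := by
      rw [hE]
      exact Real.exp_le_exp.2 (by nlinarith [dist_nonneg (x := q) (y := w)])
    have hwq' : dist w q ≤ r := hwq
    have expmono' : Real.exp (D * dist w q) ≤ E := by
      rw [hE]
      exact Real.exp_le_exp.2 (by nlinarith [dist_nonneg (x := w) (y := q)])
    have h1' : G a q ≤ E * G a w := by
      have := (hHar a q w haq haw).trans expmono
      rw [div_le_iff₀ (hpos a w)] at this
      linarith
    have h2' : G a w ≤ E * G a q := by
      have := (hHar a w q haw haq).trans expmono'
      rw [div_le_iff₀ (hpos a q)] at this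
      linarith
    have h3' : G q b ≤ E * G w b := by
      have := (hHar b q w hbq hbw).trans expmono
      rw [div_le_iff₀ (hpos b w)] at this
      rw [hsym q b, hsym w b]
      linarith
    have h4' : G w b ≤ E * G q b := by
      have := (hHar b w q hbw hbq).trans expmono'
      rw [div_le_iff₀ (hpos b q)] at this
      rw [hsym q b, hsym w b]
      linarith
    have pC : 0 < C := lt_of_lt_of_le one_pos hC
    have paw := hpos a w
    have pwb := hpos w b
    have paq := hpos a q
    have pqb := hpos q b
    have hKE : K⁻¹ * (E * E) = C⁻¹ := by
      rw [hK]; field_simp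
    constructor
    · -- lower bound
      have h5 : G a w * G w b ≤ (E * E) * (G a q * G q b) := by
        calc G a w * G w b ≤ (E * G a q) * (E * G q b) :=
              mul_le_mul h2' h4' pwb.le (by positivity)
          _ = (E * E) * (G a q * G q b) := by ring
      calc K⁻¹ * (G a w * G w b) ≤ K⁻¹ * ((E * E) * (G a q * G q b)) :=
            mul_le_mul_of_nonneg_left h5 (by positivity)
        _ = C⁻¹ * (G a q * G q b) := by rw [← mul_assoc, hKE]
        _ = C⁻¹ * G a q * G q b := by ring
        _ ≤ G a b := hlow
    · -- upper bound
      have h5 : G a q * G q b ≤ (E * E) * (G a w * G w b) := by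
        calc G a q * G q b ≤ (E * G a w) * (E * G w b) :=
              mul_le_mul h1' h3' pqb.le (by positivity)
          _ = (E * E) * (G a w * G w b) := by ring
      calc G a b ≤ C * G a q * G q b := hup
        _ = C * (G a q * G q b) := by ring
        _ ≤ C * ((E*E) * (G a w * G w b)) := by
            exact mul_le_mul_of_nonneg_left h5 (le_of_lt pC)
        _ = K * (G a w * G w b) := by rw [hK]; ring
  obtain ⟨l1, u1⟩ := key x y h1 hwx hwy
  obtain ⟨l2, u2⟩ := key x' y h2 hwx' hwy
  obtain ⟨l3, u3⟩ := key x y' h3 hwx hwy'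
  obtain ⟨l4, u4⟩ := key x' y' h4 hwx' hwy'
  set a := G x w
  set a' := G x' w
  set b := G w y
  set b' := G w y'
  have pa : 0 < a := hpos x w
  have pa' : 0 < a' := hpos x' w
  have pb : 0 < b := hpos w y
  have pb' : 0 < b' := hpos w y'
  have p1 : 0 < G x y := hpos x y
  have p2 : 0 < G x' y := hpos x' y
  have p3 : 0 < G x y' := hpos x y'
  have p4 : 0 < G x' y' := hpos x' y'
  have hKinv : (0:ℝ) < K⁻¹ := by positivity
  -- ratio bounds
  have r1up : G x y / G x' y ≤ K^2 * (a / a') := by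
    have : G x y / G x' y ≤ (K * (a * b)) / (K⁻¹ * (a' * b)) :=
      div_le_div₀ (by positivity) u1 (by positivity) l2
    calc G x y / G x' y ≤ (K * (a * b)) / (K⁻¹ * (a' * b)) := this
      _ = K^2 * (a / a') := by field_simp
  have r1lo : K⁻¹^2 * (a / a') ≤ G x y / G x' y := by
    have : (K⁻¹ * (a * b)) / (K * (a' * b)) ≤ G x y / G x' y :=
      div_le_div₀ (le_of_lt p1) l1 (by positivity) u2
    calc K⁻¹^2 * (a / a') = (K⁻¹ * (a * b)) / (K * (a' * b)) := by field_simp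
      _ ≤ G x y / G x' y := this
  have r2up : G x y' / G x' y' ≤ K^2 * (a / a') := by
    have : G x y' / G x' y' ≤ (K * (a * b')) / (K⁻¹ * (a' * b')) :=
      div_le_div₀ (by positivity) u3 (by positivity) l4
    calc G x y' / G x' y' ≤ (K * (a * b')) / (K⁻¹ * (a' * b')) := this
      _ = K^2 * (a / a') := by field_simp
  have r2lo : K⁻¹^2 * (a / a') ≤ G x y' / G x' y' := by
    have : (K⁻¹ * (a * b')) / (K * (a' * b')) ≤ G x y' / G x' y' :=
      div_le_div₀ (le_of_lt p3) l3 (by positivity) u4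
    calc K⁻¹^2 * (a / a') = (K⁻¹ * (a * b')) / (K * (a' * b')) := by field_simp
      _ ≤ G x y' / G x' y' := this
  have paa' : 0 < a / a' := by positivity
  constructor
  · have : (K⁻¹^2 * (a/a')) / (K^2 * (a/a')) ≤ G x y / G x' y / (G x y' / G x' y') :=
      div_le_div₀ (by positivity) r1lo (by positivity) r2up
    calc (K^4 : ℝ)⁻¹ = (K⁻¹^2 * (a/a')) / (K^2 * (a/a')) := by
          field_simp
      _ ≤ _ := this
  · have : G x y / G x' y / (G x y' / G x' y') ≤ (K^2 * (a/a')) / (K⁻¹^2 * (a/a')) :=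
      div_le_div₀ (by positivity) r1up (by positivity) r2lo
    calc G x y / G x' y / (G x y' / G x' y') ≤ (K^2 * (a/a')) / (K⁻¹^2 * (a/a')) := this
      _ = K^4 := by field_simp
end
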